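/- Lambda-lifted terms only modify locations in their environment: if M is a lambda-lifted term (evaluated with empty closure environments, i.e. in the call rule the captured environment is empty) and M, s ⇓_{ρ, F} v, s' under the naive semantics, then s and s' agree on dom(s) \ Im(ρ). -/

import Mathlib

namespace CPC

abbrev Loc := Nat
abbrev Var := String

inductive Val : Type
  | unit | tt | ff
  | nat (n : Nat)
deriving DecidableEq

inductive Tm : Type
  | val (v : Val)
  | var (x : Var)
  | assign (x : Var) (t : Tm)
  | ite (c t e : Tm)
  | seq (a b : Tm)
  | letrec (f : Var) (ps : List Var) (body rest : Tm)
  | call (f : Var) (args : List Tm)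

abbrev Env := Var → Option Loc
abbrev Store := Loc → Option Val

def emptyEnv : Env := fun _ => none
def emptyStore : Store := fun _ => none

/-- Modification (extension) of a partial function. -/
def updFn {α β : Type} [DecidableEq α] (f : α → Option β) (x : α) (y : β) :
    α → Option β :=
  fun t => if t = x then some y else f t

/-- Concatenation of environments: leftmost binding wins. -/
def envCat (ρ₁ ρ₂ : Env) : Env := fun x => (ρ₁ x).orElse (fun _ => ρ₂ x)

def single (x : Var) (l : Loc) : Env := updFn emptyEnv x l

def envIm (ρ : Env) : Set Loc := {l | ∃ x, ρ x = some l}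
def envDom (ρ : Env) : Set Var := {x | ρ x ≠ none}
def storeDom (s : Store) : Set Loc := {l | s l ≠ none}

open Classical in
/-- Cleaning of a store with respect to an environment. -/
noncomputable def clean (ρ : Env) (s : Store) : Store :=
  fun l => if l ∈ envIm ρ then none else s l

open Classical in
/-- Restriction of a store to a set of locations. -/
noncomputable def resStore (s : Store) (D : Set Loc) : Store :=
  fun l => if l ∈ D then s l else none

/-- Store extension: `t` agrees with `s` on `dom s`. -/
def StoreLe (s t : Store) : Prop := ∀ l ∈ storeDom s, t l = s l

/-- Environment binding a list of variables to a list of locations. -/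
def envOf (xs : List Var) (ls : List Loc) : Env := fun y => (xs.zip ls).lookup y

/-- Store updated with a list of locations bound to a list of values. -/
def updStore (s : Store) (ls : List Loc) (vs : List Val) : Store :=
  fun l => ((ls.zip vs).lookup l).orElse (fun _ => s l)

/-- Closures: parameters, body, captured variable environment,
    captured function environment. -/
inductive Clos : Type
  | mk (ps : List Var) (body : Tm) (ρ : Env) (F : List (Var × Clos))

abbrev FEnv := List (Var × Clos)

def lookupF (F : FEnv) (f : Var) : Option Clos := F.lookup f

/-- `LocIn l F`: the location `l` appears in `F`
    (in some environment captured, recursively, in a closure of `F`). -/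
inductive LocIn : Loc → FEnv → Prop
  | env {l : Loc} {F : FEnv} {f ps body ρ F'} :
      (f, Clos.mk ps body ρ F') ∈ F → l ∈ envIm ρ → LocIn l F
  | deep {l : Loc} {F : FEnv} {f ps body ρ F'} :
      (f, Clos.mk ps body ρ F') ∈ F → LocIn l F' → LocIn l F

/-! ### Naive big-step reduction rules (with derivation height) -/

mutual
inductive EvalN : Nat → Env → FEnv → Tm → Store → Val → Store → Prop
  | val {ρ : Env} {F : FEnv} {v s} : EvalN 1 ρ F (.val v) s v s
  | var {ρ : Env} {F : FEnv} {x l s w} :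
      ρ x = some l → s l = some w → EvalN 1 ρ F (.var x) s w s
  | assign {n} {ρ : Env} {F : FEnv} {a s v s' x l} :
      EvalN n ρ F a s v s' → ρ x = some l → l ∈ storeDom s' →
      EvalN (n+1) ρ F (.assign x a) s .unit (updFn s' l v)
  | seq {n m} {ρ : Env} {F : FEnv} {a b s v s' v' s''} :
      EvalN n ρ F a s v s' → EvalN m ρ F b s' v' s'' →
      EvalN (n+m+1) ρ F (.seq a b) s v' s''
  | ifT {n m} {ρ : Env} {F : FEnv} {c b e s s' v s''} :
      EvalN n ρ F c s .tt s' → EvalN m ρ F b s' v s'' →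
      EvalN (n+m+1) ρ F (.ite c b e) s v s''
  | ifF {n m} {ρ : Env} {F : FEnv} {c b e s s' v s''} :
      EvalN n ρ F c s .ff s' → EvalN m ρ F e s' v s'' →
      EvalN (n+m+1) ρ F (.ite c b e) s v s''
  | letrec {n} {ρ : Env} {F : FEnv} {f ps a b s v s'} :
      EvalN n ρ ((f, Clos.mk ps a ρ F) :: F) b s v s' →
      EvalN (n+1) ρ F (.letrec f ps a b) s v s'
  | call {n m} {ρ : Env} {F : FEnv} {f args s₁ vs s₂ xs b} {ρ' : Env} {F' : FEnv}
      {ls : List Loc} {v s'} :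
      lookupF F f = some (Clos.mk xs b ρ' F') →
      EvalNArgs n ρ F args s₁ vs s₂ →
      ls.length = xs.length → vs.length = xs.length → ls.Nodup →
      (∀ l ∈ ls, l ∉ storeDom s₂ ∧ ¬ LocIn l ((f, Clos.mk xs b ρ' F') :: F')) →
      EvalN m (envCat (envOf xs ls) ρ') ((f, Clos.mk xs b ρ' F') :: F')
        b (updStore s₂ ls vs) v s' →
      EvalN (n+m+1) ρ F (.call f args) s₁ v s'

inductive EvalNArgs : Nat → Env → FEnv → List Tm → Store → List Val → Store → Prop
  | nil {ρ : Env} {F : FEnv} {s} : EvalNArgs 0 ρ F [] s [] s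
  | cons {n m} {ρ : Env} {F : FEnv} {a as s v s' vs s''} :
      EvalN n ρ F a s v s' → EvalNArgs m ρ F as s' vs s'' →
      EvalNArgs (n+m) ρ F (a :: as) s (v :: vs) s''
end

/-! ### Intermediate big-step reduction rules (split environments,
      minimal stores, non-compact closures) -/

mutual
inductive EvalI : Nat → Env → Env → FEnv → Tm → Store → Val → Store → Prop
  | val {ρT ρ : Env} {F : FEnv} {v s} :
      EvalI 1 ρT ρ F (.val v) s v (clean ρT s)
  | var {ρT ρ : Env} {F : FEnv} {x l s w} :
      envCat ρT ρ x = some l → s l = some w →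
      EvalI 1 ρT ρ F (.var x) s w (clean ρT s)
  | assign {n} {ρT ρ : Env} {F : FEnv} {a s v s' x l} :
      EvalI n emptyEnv (envCat ρT ρ) F a s v s' →
      envCat ρT ρ x = some l → l ∈ storeDom s' →
      EvalI (n+1) ρT ρ F (.assign x a) s .unit (clean ρT (updFn s' l v))
  | seq {n m} {ρT ρ : Env} {F : FEnv} {a b s v s' v' s''} :
      EvalI n emptyEnv (envCat ρT ρ) F a s v s' → EvalI m ρT ρ F b s' v' s'' →
      EvalI (n+m+1) ρT ρ F (.seq a b) s v' s''
  | ifT {n m} {ρT ρ : Env} {F : FEnv} {c b e s s' v s''} :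
      EvalI n emptyEnv (envCat ρT ρ) F c s .tt s' → EvalI m ρT ρ F b s' v s'' →
      EvalI (n+m+1) ρT ρ F (.ite c b e) s v s''
  | ifF {n m} {ρT ρ : Env} {F : FEnv} {c b e s s' v s''} :
      EvalI n emptyEnv (envCat ρT ρ) F c s .ff s' → EvalI m ρT ρ F e s' v s'' →
      EvalI (n+m+1) ρT ρ F (.ite c b e) s v s''
  | letrec {n} {ρT ρ : Env} {F : FEnv} {f ps a b s v s'} :
      EvalI n ρT ρ ((f, Clos.mk ps a (envCat ρT ρ) F) :: F) b s v s' →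
      EvalI (n+1) ρT ρ F (.letrec f ps a b) s v s'
  | call {n m} {ρT ρ : Env} {F : FEnv} {f args s₁ vs s₂ xs b} {ρ' : Env} {F' : FEnv}
      {ls : List Loc} {v s'} :
      lookupF F f = some (Clos.mk xs b ρ' F') →
      EvalIArgs n (envCat ρT ρ) F args s₁ vs s₂ →
      ls.length = xs.length → vs.length = xs.length → ls.Nodup →
      (∀ l ∈ ls, l ∉ storeDom s₂ ∧ ¬ LocIn l ((f, Clos.mk xs b ρ' F') :: F')) →
      EvalI m (envOf xs ls) ρ' ((f, Clos.mk xs b ρ' F') :: F')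
        b (updStore s₂ ls vs) v s' →
      EvalI (n+m+1) ρT ρ F (.call f args) s₁ v (clean ρT s')

inductive EvalIArgs : Nat → Env → FEnv → List Tm → Store → List Val → Store → Prop
  | nil {ρ : Env} {F : FEnv} {s} : EvalIArgs 0 ρ F [] s [] s
  | cons {n m} {ρ : Env} {F : FEnv} {a as s v s' vs s''} :
      EvalI n emptyEnv ρ F a s v s' → EvalIArgs m ρ F as s' vs s'' →
      EvalIArgs (n+m) ρ F (a :: as) s (v :: vs) s''
end

/-- Restriction of an environment outside a list of variables. -/
def restrictEnv (ρ : Env) (ps : List Var) : Env :=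
  fun x => if x ∈ ps then none else ρ x

/-! ### Optimised big-step reduction rules (minimal stores and compact
      closures): identical to the intermediate rules except that the
      (letrec) rule builds compact closures -/

mutual
inductive EvalO : Nat → Env → Env → FEnv → Tm → Store → Val → Store → Prop
  | val {ρT ρ : Env} {F : FEnv} {v s} :
      EvalO 1 ρT ρ F (.val v) s v (clean ρT s)
  | var {ρT ρ : Env} {F : FEnv} {x l s w} :
      envCat ρT ρ x = some l → s l = some w →
      EvalO 1 ρT ρ F (.var x) s w (clean ρT s)
  | assign {n} {ρT ρ : Env} {F : FEnv} {a s v s' x l} :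
      EvalO n emptyEnv (envCat ρT ρ) F a s v s' →
      envCat ρT ρ x = some l → l ∈ storeDom s' →
      EvalO (n+1) ρT ρ F (.assign x a) s .unit (clean ρT (updFn s' l v))
  | seq {n m} {ρT ρ : Env} {F : FEnv} {a b s v s' v' s''} :
      EvalO n emptyEnv (envCat ρT ρ) F a s v s' → EvalO m ρT ρ F b s' v' s'' →
      EvalO (n+m+1) ρT ρ F (.seq a b) s v' s''
  | ifT {n m} {ρT ρ : Env} {F : FEnv} {c b e s s' v s''} :
      EvalO n emptyEnv (envCat ρT ρ) F c s .tt s' → EvalO m ρT ρ F b s' v s'' →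
      EvalO (n+m+1) ρT ρ F (.ite c b e) s v s''
  | ifF {n m} {ρT ρ : Env} {F : FEnv} {c b e s s' v s''} :
      EvalO n emptyEnv (envCat ρT ρ) F c s .ff s' → EvalO m ρT ρ F e s' v s'' →
      EvalO (n+m+1) ρT ρ F (.ite c b e) s v s''
  | letrec {n} {ρT ρ : Env} {F : FEnv} {f ps a b s v s'} :
      EvalO n ρT ρ ((f, Clos.mk ps a (restrictEnv (envCat ρT ρ) ps) F) :: F) b s v s' →
      EvalO (n+1) ρT ρ F (.letrec f ps a b) s v s'
  | call {n m} {ρT ρ : Env} {F : FEnv} {f args s₁ vs s₂ xs b} {ρ' : Env} {F' : FEnv}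
      {ls : List Loc} {v s'} :
      lookupF F f = some (Clos.mk xs b ρ' F') →
      EvalOArgs n (envCat ρT ρ) F args s₁ vs s₂ →
      ls.length = xs.length → vs.length = xs.length → ls.Nodup →
      (∀ l ∈ ls, l ∉ storeDom s₂ ∧ ¬ LocIn l ((f, Clos.mk xs b ρ' F') :: F')) →
      EvalO m (envOf xs ls) ρ' ((f, Clos.mk xs b ρ' F') :: F')
        b (updStore s₂ ls vs) v s' →
      EvalO (n+m+1) ρT ρ F (.call f args) s₁ v (clean ρT s')

inductive EvalOArgs : Nat → Env → FEnv → List Tm → Store → List Val → Store → Prop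
  | nil {ρ : Env} {F : FEnv} {s} : EvalOArgs 0 ρ F [] s [] s
  | cons {n m} {ρ : Env} {F : FEnv} {a as s v s' vs s''} :
      EvalO n emptyEnv ρ F a s v s' → EvalOArgs m ρ F as s' vs s'' →
      EvalOArgs (n+m) ρ F (a :: as) s (v :: vs) s''
end


/-- Lambda-lifted terms contain no `letrec` construct. -/
inductive NoLetrec : Tm → Prop
  | val {v} : NoLetrec (.val v)
  | var {x} : NoLetrec (.var x)
  | assign {x t} : NoLetrec t → NoLetrec (.assign x t)
  | ite {c t e} : NoLetrec c → NoLetrec t → NoLetrec e → NoLetrec (.ite c t e)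
  | seq {a b} : NoLetrec a → NoLetrec b → NoLetrec (.seq a b)
  | call {f args} : (∀ a ∈ args, NoLetrec a) → NoLetrec (.call f args)

mutual
/-- A closure of a lambda-lifted program: it captures the empty variable
environment and its body is letrec-free. -/
inductive ClosLifted : Clos → Prop
  | mk {ps b F} : NoLetrec b → FLifted F → ClosLifted (.mk ps b emptyEnv F)

/-- A function environment of a lambda-lifted program. -/
inductive FLifted : FEnv → Prop
  | nil : FLifted []
  | cons {f c F} : ClosLifted c → FLifted F → FLifted ((f, c) :: F)
end

lemma lookup_mem_of_eq_some {α β : Type} [BEq α] [LawfulBEq α]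
    {l : List (α × β)} {k : α} {b : β} (h : l.lookup k = some b) : (k, b) ∈ l := by
  obtain ⟨l₁, l₂, rfl, -⟩ := List.lookup_eq_some_iff.1 h
  simp

lemma flifted_lookup : ∀ {F : FEnv} {f : Var} {c : Clos},
    FLifted F → lookupF F f = some c → ClosLifted c := by
  intro F
  induction F with
  | nil => intro f c _ h; simp [lookupF, List.lookup] at h
  | cons p F ih =>
    intro f c hF h
    obtain ⟨g, c'⟩ := p
    cases hF with
    | cons hc hF' =>
      unfold lookupF at h
      rw [List.lookup] at h
      by_cases hfg : f = g
      · simp [hfg] at h; exact h ▸ hc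
      · have hb : (f == g) = false := by simp [hfg]
        rw [hb] at h
        exact ih hF' h

lemma mem_of_envOf {xs : List Var} {ls : List Loc} {x : Var} {l : Loc}
    (h : envOf xs ls x = some l) : l ∈ ls :=
  (List.of_mem_zip (lookup_mem_of_eq_some h)).2

lemma updStore_eq_of_not_mem {s : Store} {ls : List Loc} {vs : List Val} {l : Loc}
    (h : l ∉ ls) : updStore s ls vs l = s l := by
  unfold updStore
  have hnone : (ls.zip vs).lookup l = none := by
    cases hlk : (ls.zip vs).lookup l with
    | none => rfl
    | some w =>
      exact absurd (List.of_mem_zip (lookup_mem_of_eq_some hlk)).1 h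
  simp [hnone, Option.orElse]

lemma storeDom_of_eq {s t : Store} {l : Loc} (h : t l = s l)
    (hl : l ∈ storeDom s) : l ∈ storeDom t := by
  simp only [storeDom, Set.mem_setOf_eq] at *
  rw [h]; exact hl

lemma envIm_cat_empty {xs : List Var} {ls : List Loc} {l : Loc}
    (h : l ∈ envIm (envCat (envOf xs ls) emptyEnv)) : l ∈ ls := by
  obtain ⟨x, hx⟩ := h
  unfold envCat at hx
  cases hx' : envOf xs ls x with
  | none => rw [hx'] at hx; simp [Option.orElse, emptyEnv] at hx
  | some l' =>
    rw [hx'] at hx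
    simp [Option.orElse] at hx
    exact hx ▸ mem_of_envOf hx'

lemma lifted_store_invariant_aux :
    ∀ {n : Nat} {ρ : Env} {F : FEnv} {M : Tm} {s s' : Store} {v : Val},
    EvalN n ρ F M s v s' → NoLetrec M → FLifted F →
    ∀ l ∈ storeDom s, l ∉ envIm ρ → s' l = s l := by
  intro n ρ F M s s' v h
  induction h using EvalN.rec
    (motive_2 := fun n ρ F as s vs s' _ =>
      (∀ a ∈ as, NoLetrec a) → FLifted F →
      ∀ l ∈ storeDom s, l ∉ envIm ρ → s' l = s l) with
  | val => intros; rfl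
  | var => intros; rfl
  | assign h1 hx hd ih =>
    intro hM hF l hl him
    cases hM with
    | assign ha =>
      rename_i x lx
      have hne : l ≠ lx := fun he => him ⟨x, he ▸ hx⟩
      rw [updFn, if_neg hne]
      exact ih ha hF l hl him
  | seq _ _ iha ihb =>
    intro hM hF l hl him
    cases hM with
    | seq ha hb =>
      have h1 := iha ha hF l hl him
      have h2 := ihb hb hF l (storeDom_of_eq h1 hl) him
      rw [h2, h1]
  | ifT _ _ iha ihb =>
    intro hM hF l hl him
    cases hM with
    | ite hc ht he =>
      have h1 := iha hc hF l hl him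
      have h2 := ihb ht hF l (storeDom_of_eq h1 hl) him
      rw [h2, h1]
  | ifF _ _ iha ihb =>
    intro hM hF l hl him
    cases hM with
    | ite hc ht he =>
      have h1 := iha hc hF l hl him
      have h2 := ihb he hF l (storeDom_of_eq h1 hl) him
      rw [h2, h1]
  | letrec _ _ =>
    intro hM; cases hM
  | call hlk hargsE hlen1 hlen2 hnd hfresh hbodyE ihargs ihbody =>
    intro hM hF l hl him
    cases hM with
    | call hargs =>
      have hc := flifted_lookup hF hlk
      cases hc with
      | mk hb hF' =>
        have h1 := ihargs hargs hF l hl him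
        have hl2 := storeDom_of_eq h1 hl
        have hnotls := fun hmem => (hfresh l hmem).1 hl2
        have h2 := ihbody hb (FLifted.cons (ClosLifted.mk hb hF') hF')
          l (storeDom_of_eq (updStore_eq_of_not_mem hnotls) hl2)
          (fun hin => hnotls (envIm_cat_empty hin))
        rw [h2, updStore_eq_of_not_mem hnotls, h1]
  | nil => rfl
  | cons _ _ iha ihas =>
    rename_i hM hF l hl him
    have ha := hM _ (List.mem_cons_self)
    have has : ∀ a' ∈ _, NoLetrec a' := fun a' h' => hM _ (List.mem_cons_of_mem _ h')
    have h1 := iha ha hF l hl him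
    have h2 := ihas has hF l (storeDom_of_eq h1 hl) him
    rw [h2, h1]

/-- lambda-lifted terms only modify locations in the image
of their environment. -/
theorem lifted_store_invariant
    {n : Nat} {ρ : Env} {F : FEnv} {M : Tm} {s s' : Store} {v : Val}
    (hM : NoLetrec M) (hF : FLifted F)
    (h : EvalN n ρ F M s v s') :
    ∀ l ∈ storeDom s, l ∉ envIm ρ → s' l = s l := by
  exact lifted_store_invariant_aux h hM hF

end CPC
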